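/- (Generalized cut-set bound at the action node.) Under the memoryless action-dependent source setup, let M = g(X^n) for any deterministic map g into a finite set. Then H(M) + H(X^n | Y^n, M) ≥ Σ_{i=1}^n [ I(X_i ; A_i) − I(Y_i ; A_i) + H(X_i | A_i, Y_i) ]. -/

import Mathlib

set_option linter.unusedSectionVars false
set_option linter.unusedVariables false
set_option maxHeartbeats 1000000

open Finset

/-- Probability that the random variable `X` takes the value `s`, under the pmf `p`. -/
noncomputable def probOf {Ω S : Type*} [Fintype Ω] [DecidableEq S]
    (p : Ω → ℝ) (X : Ω → S) (s : S) : ℝ :=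
  ∑ ω : Ω, if X ω = s then p ω else 0

/-- Base-2 Shannon entropy of the random variable `X` under the pmf `p`. -/
noncomputable def ent {Ω S : Type*} [Fintype Ω] [Fintype S] [DecidableEq S]
    (p : Ω → ℝ) (X : Ω → S) : ℝ :=
  ∑ s : S, Real.negMulLog (probOf p X s) / Real.log 2

/-- Conditional entropy `H(X | Y)` (base 2). -/
noncomputable def condEnt {Ω S T : Type*} [Fintype Ω] [Fintype S] [Fintype T]
    [DecidableEq S] [DecidableEq T] (p : Ω → ℝ) (X : Ω → S) (Y : Ω → T) : ℝ :=
  ent p (fun ω => (X ω, Y ω)) - ent p Y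

/-- Mutual information `I(X ; Y)` (base 2). -/
noncomputable def mutInfo {Ω S T : Type*} [Fintype Ω] [Fintype S] [Fintype T]
    [DecidableEq S] [DecidableEq T] (p : Ω → ℝ) (X : Ω → S) (Y : Ω → T) : ℝ :=
  ent p X + ent p Y - ent p (fun ω => (X ω, Y ω))

noncomputable def ent' {Ω S : Type*} [Fintype Ω] [Fintype S] [DecidableEq S]
    (p : Ω → ℝ) (X : Ω → S) : ℝ :=
  ∑ s : S, Real.negMulLog (probOf p X s)

section general
variable {Ω S T : Type*} [Fintype Ω] (p : Ω → ℝ)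

lemma probOf_nonneg [DecidableEq S] (hp0 : ∀ ω, 0 ≤ p ω) (X : Ω → S) (s : S) :
    0 ≤ probOf p X s :=
  Finset.sum_nonneg fun ω _ => by split; exacts [hp0 ω, le_refl 0]

lemma sum_probOf_mul [Fintype S] [DecidableEq S] (X : Ω → S) (F : S → ℝ) :
    ∑ s, probOf p X s * F s = ∑ ω, p ω * F (X ω) := by
  simp only [probOf, Finset.sum_mul]
  rw [Finset.sum_comm]
  refine Finset.sum_congr rfl fun ω _ => ?_
  simp

lemma sum_probOf [Fintype S] [DecidableEq S] (X : Ω → S) :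
    ∑ s, probOf p X s = ∑ ω, p ω := by
  have := sum_probOf_mul p X (fun _ => 1)
  simpa using this

lemma probOf_le_probOf_comp [DecidableEq S] [DecidableEq T] (hp0 : ∀ ω, 0 ≤ p ω)
    (X : Ω → S) (φ : S → T) (s : S) :
    probOf p X s ≤ probOf p (fun ω => φ (X ω)) (φ s) := by
  refine Finset.sum_le_sum fun ω _ => ?_
  dsimp only
  by_cases h : X ω = s
  · simp [h]
  · rw [if_neg h]
    split
    · exact hp0 ω
    · exact le_refl 0

lemma probOf_comp_ne_zero [DecidableEq S] [DecidableEq T] (hp0 : ∀ ω, 0 ≤ p ω)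
    (X : Ω → S) (φ : S → T) (s : S) (h : probOf p X s ≠ 0) :
    probOf p (fun ω => φ (X ω)) (φ s) ≠ 0 := by
  have h1 := probOf_nonneg p hp0 X s
  have h2 := probOf_le_probOf_comp p hp0 X φ s
  intro h0
  exact h (le_antisymm (h0 ▸ h2) h1)

lemma ent'_comp_inj [Fintype S] [DecidableEq S] [Fintype T] [DecidableEq T]
    (X : Ω → S) (h : S → T) (hh : Function.Injective h) :
    ent' p (fun ω => h (X ω)) = ent' p X := by
  have key : ∀ s, probOf p (fun ω => h (X ω)) (h s) = probOf p X s := by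
    intro s
    refine Finset.sum_congr rfl fun ω _ => ?_
    simp [hh.eq_iff]
  have zero : ∀ t, t ∉ Finset.univ.image h → probOf p (fun ω => h (X ω)) t = 0 := by
    intro t ht
    refine Finset.sum_eq_zero fun ω _ => ?_
    rw [if_neg]
    intro he
    exact ht (Finset.mem_image.2 ⟨X ω, Finset.mem_univ _, he⟩)
  unfold ent'
  rw [← Finset.sum_subset (Finset.subset_univ (Finset.univ.image h))
    (fun t _ ht => by rw [zero t ht, Real.negMulLog_zero])]
  rw [Finset.sum_image (fun a _ b _ hab => hh hab)]
  exact Finset.sum_congr rfl fun s _ => by rw [key]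

lemma gibbs [Fintype S] [DecidableEq S] (hp0 : ∀ ω, 0 ≤ p ω) (hp1 : ∑ ω, p ω = 1)
    (X : Ω → S) (q : S → ℝ) (hq0 : ∀ s, 0 ≤ q s) (hq1 : ∑ s, q s ≤ 1)
    (hsupp : ∀ s, probOf p X s ≠ 0 → q s ≠ 0) :
    ent' p X ≤ ∑ s, -(probOf p X s * Real.log (q s)) := by
  have key : ∀ s, Real.negMulLog (probOf p X s) ≤
      q s - probOf p X s + -(probOf p X s * Real.log (q s)) := by
    intro s
    set r := probOf p X s with hr
    by_cases h0 : r = 0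
    · simp [h0, Real.negMulLog, hq0 s]
    · have hrpos : 0 < r := lt_of_le_of_ne (probOf_nonneg p hp0 X s) (Ne.symm h0)
      have hqpos : 0 < q s := lt_of_le_of_ne (hq0 s) (Ne.symm (hsupp s h0))
      have hlog : Real.log (q s / r) ≤ q s / r - 1 :=
        Real.log_le_sub_one_of_pos (div_pos hqpos hrpos)
      rw [Real.log_div (ne_of_gt hqpos) h0] at hlog
      have := mul_le_mul_of_nonneg_left hlog (le_of_lt hrpos)
      have hdr : r * (q s / r - 1) = q s - r := by field_simp
      rw [hdr, mul_sub] at this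
      rw [Real.negMulLog, neg_mul]
      nlinarith
  calc ent' p X ≤ ∑ s, (q s - probOf p X s + -(probOf p X s * Real.log (q s))) :=
        Finset.sum_le_sum fun s _ => key s
    _ = (∑ s, q s) - (∑ s, probOf p X s) + ∑ s, -(probOf p X s * Real.log (q s)) := by
        rw [Finset.sum_add_distrib, Finset.sum_sub_distrib]
    _ ≤ ∑ s, -(probOf p X s * Real.log (q s)) := by
        rw [sum_probOf p X, hp1]; linarith

lemma probOf_fst_marg [Fintype S] [DecidableEq S] [Fintype T] [DecidableEq T]
    (X : Ω → S) (Y : Ω → T) (s : S) :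
    ∑ t, probOf p (fun ω => (X ω, Y ω)) (s, t) = probOf p X s := by
  unfold probOf
  rw [Finset.sum_comm]
  refine Finset.sum_congr rfl fun ω _ => ?_
  by_cases h : X ω = s
  · simp [h, Prod.ext_iff]
  · simp [h, Prod.ext_iff]

lemma probOf_snd_marg [Fintype S] [DecidableEq S] [Fintype T] [DecidableEq T]
    (X : Ω → S) (Y : Ω → T) (t : T) :
    ∑ s, probOf p (fun ω => (X ω, Y ω)) (s, t) = probOf p Y t := by
  unfold probOf
  rw [Finset.sum_comm]
  refine Finset.sum_congr rfl fun ω _ => ?_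
  by_cases h : Y ω = t
  · simp [h, Prod.ext_iff]
  · simp [h, Prod.ext_iff]

lemma ent'_pair_le [Fintype S] [DecidableEq S] [Fintype T] [DecidableEq T]
    (hp0 : ∀ ω, 0 ≤ p ω) (hp1 : ∑ ω, p ω = 1) (X : Ω → S) (Y : Ω → T) :
    ent' p (fun ω => (X ω, Y ω)) ≤ ent' p X + ent' p Y := by
  set q : S × T → ℝ := fun st => probOf p X st.1 * probOf p Y st.2 with hq
  have hq0 : ∀ st, 0 ≤ q st := fun st =>
    mul_nonneg (probOf_nonneg p hp0 X st.1) (probOf_nonneg p hp0 Y st.2)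
  have hq1 : ∑ st, q st ≤ 1 := by
    rw [Fintype.sum_prod_type]
    simp only [hq]
    rw [← Finset.sum_mul_sum]
    rw [sum_probOf p X, sum_probOf p Y, hp1, mul_one]
  have hsupp : ∀ st, probOf p (fun ω => (X ω, Y ω)) st ≠ 0 → q st ≠ 0 := by
    rintro ⟨s, t⟩ h
    have h1 := probOf_comp_ne_zero p hp0 (fun ω => (X ω, Y ω)) Prod.fst (s, t) h
    have h2 := probOf_comp_ne_zero p hp0 (fun ω => (X ω, Y ω)) Prod.snd (s, t) h
    exact mul_ne_zero h1 h2
  refine le_trans (gibbs p hp0 hp1 _ q hq0 hq1 hsupp) (le_of_eq ?_)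
  have split : ∀ st : S × T, -(probOf p (fun ω => (X ω, Y ω)) st * Real.log (q st)) =
      -(probOf p (fun ω => (X ω, Y ω)) st * Real.log (probOf p X st.1)) +
      -(probOf p (fun ω => (X ω, Y ω)) st * Real.log (probOf p Y st.2)) := by
    intro st
    by_cases h0 : probOf p (fun ω => (X ω, Y ω)) st = 0
    · simp [h0]
    · obtain ⟨s, t⟩ := st
      have h1 := probOf_comp_ne_zero p hp0 (fun ω => (X ω, Y ω)) Prod.fst (s, t) h0
      have h2 := probOf_comp_ne_zero p hp0 (fun ω => (X ω, Y ω)) Prod.snd (s, t) h0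
      rw [hq]; dsimp only
      rw [Real.log_mul h1 h2]
      ring
  rw [Finset.sum_congr rfl fun st _ => split st, Finset.sum_add_distrib]
  congr 1
  · rw [Fintype.sum_prod_type]
    unfold ent'
    refine Finset.sum_congr rfl fun s _ => ?_
    have : ∑ t, -(probOf p (fun ω => (X ω, Y ω)) (s, t) * Real.log (probOf p X s))
        = -((∑ t, probOf p (fun ω => (X ω, Y ω)) (s, t)) * Real.log (probOf p X s)) := by
      rw [Finset.sum_mul, ← Finset.sum_neg_distrib]
    rw [this, probOf_fst_marg, Real.negMulLog, neg_mul]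
  · rw [Fintype.sum_prod_type, Finset.sum_comm]
    unfold ent'
    refine Finset.sum_congr rfl fun t _ => ?_
    have : ∑ s, -(probOf p (fun ω => (X ω, Y ω)) (s, t) * Real.log (probOf p Y t))
        = -((∑ s, probOf p (fun ω => (X ω, Y ω)) (s, t)) * Real.log (probOf p Y t)) := by
      rw [Finset.sum_mul]
      rw [← Finset.sum_neg_distrib]
    rw [this, probOf_snd_marg, Real.negMulLog, neg_mul]

lemma ent'_pi_le {ι β : Type*} [Fintype ι] [DecidableEq ι] [Fintype β] [DecidableEq β]
    (hp0 : ∀ ω, 0 ≤ p ω) (hp1 : ∑ ω, p ω = 1) (Z : Ω → ι → β) :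
    ent' p Z ≤ ∑ i, ent' p (fun ω => Z ω i) := by
  set q : (ι → β) → ℝ := fun zv => ∏ i, probOf p (fun ω => Z ω i) (zv i) with hq
  have hq0 : ∀ zv, 0 ≤ q zv := fun zv =>
    Finset.prod_nonneg fun i _ => probOf_nonneg p hp0 _ _
  have hq1 : ∑ zv, q zv ≤ 1 := by
    rw [hq, ← Fintype.prod_sum]
    have : ∀ i ∈ Finset.univ, ∑ b, probOf p (fun ω => Z ω i) b = 1 := fun i _ => by
      rw [sum_probOf p _, hp1]
    rw [Finset.prod_congr rfl this, Finset.prod_const_one]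
  have hmarg : ∀ zv i, probOf p Z zv ≠ 0 → probOf p (fun ω => Z ω i) (zv i) ≠ 0 :=
    fun zv i h => probOf_comp_ne_zero p hp0 Z (fun v => v i) zv h
  have hsupp : ∀ zv, probOf p Z zv ≠ 0 → q zv ≠ 0 := fun zv h =>
    Finset.prod_ne_zero_iff.2 fun i _ => hmarg zv i h
  refine le_trans (gibbs p hp0 hp1 _ q hq0 hq1 hsupp) (le_of_eq ?_)
  have split : ∀ zv, -(probOf p Z zv * Real.log (q zv)) =
      ∑ i, -(probOf p Z zv * Real.log (probOf p (fun ω => Z ω i) (zv i))) := by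
    intro zv
    by_cases h0 : probOf p Z zv = 0
    · simp [h0]
    · rw [hq]; dsimp only
      rw [Real.log_prod (fun i _ => hmarg zv i h0), Finset.mul_sum,
        ← Finset.sum_neg_distrib]
  rw [Finset.sum_congr rfl fun zv _ => split zv, Finset.sum_comm]
  refine Finset.sum_congr rfl fun i _ => ?_
  have step1 : ∑ zv, -(probOf p Z zv * Real.log (probOf p (fun ω => Z ω i) (zv i)))
      = -∑ ω, p ω * Real.log (probOf p (fun ω => Z ω i) (Z ω i)) := by
    rw [Finset.sum_neg_distrib]
    exact congrArg Neg.neg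
      (sum_probOf_mul p Z (fun zv => Real.log (probOf p (fun ω => Z ω i) (zv i))))
  have step2 : ent' p (fun ω => Z ω i)
      = -∑ ω, p ω * Real.log (probOf p (fun ω => Z ω i) (Z ω i)) := by
    unfold ent'
    rw [← sum_probOf_mul p (fun ω => Z ω i) (fun b => Real.log (probOf p (fun ω => Z ω i) b)),
      ← Finset.sum_neg_distrib]
    exact Finset.sum_congr rfl fun b _ => by rw [Real.negMulLog]; ring
  rw [step1, ← step2]

lemma negMulLog_prod {ι : Type*} [DecidableEq ι] (s : Finset ι) (c : ι → ℝ) :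
    Real.negMulLog (∏ i ∈ s, c i)
      = ∑ j ∈ s, (∏ k ∈ s.erase j, c k) * Real.negMulLog (c j) := by
  induction s using Finset.induction_on with
  | empty => simp
  | @insert a s ha ih =>
    rw [Finset.prod_insert ha, Real.negMulLog_mul, Finset.sum_insert ha,
      Finset.erase_insert ha, ih, Finset.mul_sum]
    congr 1
    refine Finset.sum_congr rfl fun j hj => ?_
    rw [Finset.erase_insert_of_ne (by rintro rfl; exact ha hj),
      Finset.prod_insert (fun h => ha (Finset.mem_of_mem_erase h))]
    ring

/-- Sum over a pi type of a product with one coordinate pinned. -/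
lemma sum_pi_pin {ι β : Type*} [Fintype ι] [DecidableEq ι] [Fintype β] [DecidableEq β]
    (v : ι → β → ℝ) (j : ι) (b0 : β) :
    ∑ xv : ι → β, (if xv j = b0 then ∏ i, v i (xv i) else 0)
      = v j b0 * ∏ i ∈ Finset.univ.erase j, ∑ b, v i b := by
  have key : ∀ xv : ι → β, (if xv j = b0 then ∏ i, v i (xv i) else 0)
      = ∏ i, (if i = j then (if xv i = b0 then v i (xv i) else 0) else v i (xv i)) := by
    intro xv
    by_cases h : xv j = b0
    · rw [if_pos h]
      refine Finset.prod_congr rfl fun i _ => ?_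
      by_cases hij : i = j
      · subst hij; rw [if_pos rfl, if_pos h]
      · rw [if_neg hij]
    · rw [if_neg h]
      refine (Finset.prod_eq_zero (Finset.mem_univ j) ?_).symm
      rw [if_pos rfl, if_neg h]
  rw [Finset.sum_congr rfl fun xv _ => key xv,
    ← Fintype.prod_sum (κ := fun _ : ι => β)
      (f := fun i b => if i = j then (if b = b0 then v i b else 0) else v i b)]
  have fac : ∀ i, (∑ b, if i = j then (if b = b0 then v i b else 0) else v i b)
      = if i = j then v j b0 else ∑ b, v i b := by
    intro i
    by_cases hij : i = j
    · subst hij; simp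
    · simp [hij]
  rw [Finset.prod_congr rfl fun i _ => fac i]
  have upd : ∀ i, (if i = j then v j b0 else ∑ b, v i b)
      = Function.update (fun i => ∑ b, v i b) j (v j b0) i := by
    intro i; simp [Function.update_apply]
  rw [Finset.prod_congr rfl fun i _ => upd i,
    Finset.prod_update_of_mem (Finset.mem_univ j), Finset.erase_eq]


/-- Sum over a pi type of (product over erased coords) times a function of one coord. -/
lemma sum_pi_split {ι β : Type*} [Fintype ι] [DecidableEq ι] [Fintype β] [DecidableEq β]
    (v : ι → β → ℝ) (j : ι) (G : β → ℝ) :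
    ∑ xv : ι → β, (∏ k ∈ Finset.univ.erase j, v k (xv k)) * G (xv j)
      = (∑ b, G b) * ∏ k ∈ Finset.univ.erase j, ∑ b, v k b := by
  have key : ∀ xv : ι → β, (∏ k ∈ Finset.univ.erase j, v k (xv k)) * G (xv j)
      = ∏ k, (if k = j then G (xv k) else v k (xv k)) := by
    intro xv
    rw [← Finset.mul_prod_erase Finset.univ _ (Finset.mem_univ j), if_pos rfl]
    rw [Finset.prod_congr rfl (fun k hk => if_neg (Finset.mem_erase.1 hk).1)]
    ring
  rw [Finset.sum_congr rfl fun xv _ => key xv,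
    ← Fintype.prod_sum (κ := fun _ : ι => β)
      (f := fun k b => if k = j then G b else v k b)]
  have fac : ∀ k, (∑ b, if k = j then G b else v k b)
      = if k = j then ∑ b, G b else ∑ b, v k b := by
    intro k
    by_cases hkj : k = j
    · simp [hkj]
    · simp [hkj]
  rw [Finset.prod_congr rfl fun k _ => fac k]
  have upd : ∀ k, (if k = j then ∑ b, G b else ∑ b, v k b)
      = Function.update (fun k => ∑ b, v k b) j (∑ b, G b) k := by
    intro k; simp [Function.update_apply]
  rw [Finset.prod_congr rfl fun k _ => upd k,
    Finset.prod_update_of_mem (Finset.mem_univ j), Finset.erase_eq]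

lemma probOf_id [DecidableEq Ω] (ω0 : Ω) : probOf p (fun ω => ω) ω0 = p ω0 := by
  simp [probOf]

end general

/-- Joint pmf of `(X^n, Y^n)` in the memoryless action-dependent source setup:
`X^n` i.i.d. `∼ μ`, `A^n = f X^n`, and conditionally on `X^n = x^n` the coordinates of `Y^n`
are independent with `Y_i ∼ W (x_i) (f x^n i)`. -/
noncomputable def jointPmf {n : ℕ} {𝒳 𝒜 𝒴 : Type*}
    (μ : 𝒳 → ℝ) (f : (Fin n → 𝒳) → (Fin n → 𝒜)) (W : 𝒳 → 𝒜 → 𝒴 → ℝ) :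
    (Fin n → 𝒳) × (Fin n → 𝒴) → ℝ :=
  fun ω => (∏ i, μ (ω.1 i)) * ∏ i, W (ω.1 i) (f ω.1 i) (ω.2 i)

section specific
variable {n : ℕ} {𝒳 𝒜 𝒴 : Type*}
    [Fintype 𝒳] [DecidableEq 𝒳] [Fintype 𝒜] [DecidableEq 𝒜] [Fintype 𝒴] [DecidableEq 𝒴]
    (μ : 𝒳 → ℝ) (f : (Fin n → 𝒳) → (Fin n → 𝒜)) (W : 𝒳 → 𝒜 → 𝒴 → ℝ)

lemma jp_apply (xv : Fin n → 𝒳) (yv : Fin n → 𝒴) :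
    jointPmf μ f W (xv, yv) = (∏ k, μ (xv k)) * ∏ j, W (xv j) (f xv j) (yv j) := rfl

lemma jp_nonneg (hμ0 : ∀ x, 0 ≤ μ x) (hW0 : ∀ x a y, 0 ≤ W x a y) (ω) :
    0 ≤ jointPmf μ f W ω :=
  mul_nonneg (Finset.prod_nonneg fun i _ => hμ0 _) (Finset.prod_nonneg fun i _ => hW0 _ _ _)

lemma sumQ (hW1 : ∀ x a, ∑ y, W x a y = 1) (x : Fin n → 𝒳) :
    ∑ yv : Fin n → 𝒴, ∏ j, W (x j) (f x j) (yv j) = 1 := by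
  rw [← Fintype.prod_sum (κ := fun _ : Fin n => 𝒴) (f := fun j y => W (x j) (f x j) y)]
  simp [hW1]

lemma sumP (hμ1 : ∑ x, μ x = 1) :
    ∑ xv : Fin n → 𝒳, ∏ k, μ (xv k) = 1 := by
  rw [← Fintype.prod_sum (κ := fun _ : Fin n => 𝒳) (f := fun _ x => μ x)]
  simp [hμ1]

lemma jp_sum (hμ1 : ∑ x, μ x = 1) (hW1 : ∀ x a, ∑ y, W x a y = 1) :
    ∑ ω, jointPmf μ f W ω = 1 := by
  rw [Fintype.sum_prod_type]
  have : ∀ xv : Fin n → 𝒳, ∑ yv : Fin n → 𝒴,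
      jointPmf μ f W (xv, yv) = ∏ k, μ (xv k) := by
    intro xv
    rw [Finset.sum_congr rfl fun yv _ => jp_apply μ f W xv yv, ← Finset.mul_sum,
      sumQ f W hW1, mul_one]
  rw [Finset.sum_congr rfl fun xv _ => this xv, sumP μ hμ1]

lemma probOf_X (hμ1 : ∑ x, μ x = 1) (hW1 : ∀ x a, ∑ y, W x a y = 1) (i : Fin n) (x : 𝒳) :
    probOf (jointPmf μ f W) (fun ω => ω.1 i) x = μ x := by
  unfold probOf
  rw [Fintype.sum_prod_type]
  have inner : ∀ xv : Fin n → 𝒳, ∑ yv : Fin n → 𝒴,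
      (if xv i = x then jointPmf μ f W (xv, yv) else 0)
      = (if xv i = x then ∏ k, μ (xv k) else 0) := by
    intro xv
    by_cases h : xv i = x
    · simp only [if_pos h]
      rw [Finset.sum_congr rfl fun yv _ => jp_apply μ f W xv yv, ← Finset.mul_sum,
        sumQ f W hW1, mul_one]
    · simp [h]
  rw [Finset.sum_congr rfl fun xv _ => inner xv]
  have := sum_pi_pin (fun _ : Fin n => μ) i x
  rw [this]
  simp [hμ1]


lemma probOf_XA (hW1 : ∀ x a, ∑ y, W x a y = 1) (i : Fin n) (x : 𝒳) (a : 𝒜) :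
    probOf (jointPmf μ f W) (fun ω => (ω.1 i, f ω.1 i)) (x, a)
      = ∑ xv : Fin n → 𝒳, (if (xv i, f xv i) = (x, a) then ∏ k, μ (xv k) else 0) := by
  unfold probOf
  rw [Fintype.sum_prod_type]
  refine Finset.sum_congr rfl fun xv _ => ?_
  by_cases h : (xv i, f xv i) = (x, a)
  · simp only [if_pos h]
    rw [Finset.sum_congr rfl fun yv _ => jp_apply μ f W xv yv, ← Finset.mul_sum,
      sumQ f W hW1, mul_one]
  · simp [h]

lemma probOf_T (hW1 : ∀ x a, ∑ y, W x a y = 1) (i : Fin n) (x : 𝒳) (a : 𝒜) (y : 𝒴) :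
    probOf (jointPmf μ f W) (fun ω => ((ω.1 i, f ω.1 i), ω.2 i)) ((x, a), y)
      = probOf (jointPmf μ f W) (fun ω => (ω.1 i, f ω.1 i)) (x, a) * W x a y := by
  rw [probOf_XA μ f W hW1 i x a]
  unfold probOf
  rw [Fintype.sum_prod_type, Finset.sum_mul]
  refine Finset.sum_congr rfl fun xv _ => ?_
  have cond : ∀ yv : Fin n → 𝒴, (((xv, yv).1 i, f (xv, yv).1 i), (xv, yv).2 i) = ((x, a), y)
      ↔ ((xv i, f xv i) = (x, a) ∧ yv i = y) := by
    intro yv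
    constructor
    · intro h
      exact ⟨congrArg Prod.fst h, congrArg Prod.snd h⟩
    · rintro ⟨h1, h2⟩
      rw [Prod.mk.injEq]
      exact ⟨h1, h2⟩
  have step : ∀ yv : Fin n → 𝒴,
      (if (((xv, yv).1 i, f (xv, yv).1 i), (xv, yv).2 i) = ((x, a), y)
        then jointPmf μ f W (xv, yv) else 0)
      = if (xv i, f xv i) = (x, a)
          then (∏ k, μ (xv k)) * (if yv i = y then ∏ j, W (xv j) (f xv j) (yv j) else 0)
          else 0 := by
    intro yv
    rw [if_congr (cond yv) rfl rfl, ite_and, jp_apply]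
    by_cases h1 : (xv i, f xv i) = (x, a)
    · rw [if_pos h1, if_pos h1, mul_ite, mul_zero]
    · rw [if_neg h1, if_neg h1]
  rw [Finset.sum_congr rfl fun yv _ => step yv]
  by_cases h1 : (xv i, f xv i) = (x, a)
  · simp only [if_pos h1]
    rw [← Finset.mul_sum, sum_pi_pin (fun k => W (xv k) (f xv k)) i y]
    have hx : xv i = x := congrArg Prod.fst h1
    have ha : f xv i = a := congrArg Prod.snd h1
    have : ∏ k ∈ Finset.univ.erase i, ∑ b, W (xv k) (f xv k) b = 1 := by
      rw [Finset.prod_congr rfl fun k _ => hW1 (xv k) (f xv k), Finset.prod_const_one]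
    rw [this, mul_one, hx, ha]
  · simp [h1]

lemma kappa_sum (hW1 : ∀ x a, ∑ y, W x a y = 1) (i : Fin n) (F : 𝒳 → 𝒜 → ℝ) :
    ∑ st : 𝒳 × 𝒜, probOf (jointPmf μ f W) (fun ω => (ω.1 i, f ω.1 i)) st * F st.1 st.2
      = ∑ xv : Fin n → 𝒳, (∏ k, μ (xv k)) * F (xv i) (f xv i) := by
  rw [sum_probOf_mul (jointPmf μ f W) (fun ω => (ω.1 i, f ω.1 i)) (fun st => F st.1 st.2)]
  rw [Fintype.sum_prod_type]
  refine Finset.sum_congr rfl fun xv _ => ?_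
  simp only [jp_apply]
  rw [← Finset.sum_mul, ← Finset.mul_sum, sumQ f W hW1, mul_one]

lemma entX (hμ1 : ∑ x, μ x = 1) (hW1 : ∀ x a, ∑ y, W x a y = 1) (i : Fin n) :
    ent' (jointPmf μ f W) (fun ω => ω.1 i) = ∑ x, Real.negMulLog (μ x) := by
  unfold ent'
  exact Finset.sum_congr rfl fun x _ => by rw [probOf_X μ f W hμ1 hW1 i x]

lemma entT (hW1 : ∀ x a, ∑ y, W x a y = 1) (i : Fin n) :
    ent' (jointPmf μ f W) (fun ω => ((ω.1 i, f ω.1 i), ω.2 i))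
      = ent' (jointPmf μ f W) (fun ω => (ω.1 i, f ω.1 i))
        + ∑ xv : Fin n → 𝒳, (∏ k, μ (xv k)) * ∑ y, Real.negMulLog (W (xv i) (f xv i) y) := by
  unfold ent'
  rw [Fintype.sum_prod_type]
  have step : ∀ st : 𝒳 × 𝒜, ∑ y,
      Real.negMulLog (probOf (jointPmf μ f W) (fun ω => ((ω.1 i, f ω.1 i), ω.2 i)) (st, y))
      = Real.negMulLog (probOf (jointPmf μ f W) (fun ω => (ω.1 i, f ω.1 i)) st)
        + probOf (jointPmf μ f W) (fun ω => (ω.1 i, f ω.1 i)) st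
          * ∑ y, Real.negMulLog (W st.1 st.2 y) := by
    rintro ⟨x, a⟩
    have : ∀ y, Real.negMulLog
        (probOf (jointPmf μ f W) (fun ω => ((ω.1 i, f ω.1 i), ω.2 i)) ((x, a), y))
        = W x a y * Real.negMulLog (probOf (jointPmf μ f W) (fun ω => (ω.1 i, f ω.1 i)) (x, a))
          + probOf (jointPmf μ f W) (fun ω => (ω.1 i, f ω.1 i)) (x, a)
            * Real.negMulLog (W x a y) := by
      intro y
      rw [probOf_T μ f W hW1 i x a y, Real.negMulLog_mul]
    rw [Finset.sum_congr rfl fun y _ => this y, Finset.sum_add_distrib,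
      ← Finset.sum_mul, hW1 x a, one_mul, ← Finset.mul_sum]
  rw [Finset.sum_congr rfl fun st _ => step st, Finset.sum_add_distrib]
  congr 1
  exact kappa_sum μ f W hW1 i (fun x a => ∑ y, Real.negMulLog (W x a y))

lemma entId (hμ1 : ∑ x, μ x = 1) (hW1 : ∀ x a, ∑ y, W x a y = 1) :
    ent' (jointPmf μ f W) (fun ω => ω)
      = (∑ _i : Fin n, ∑ x, Real.negMulLog (μ x))
        + ∑ i : Fin n, ∑ xv : Fin n → 𝒳,
            (∏ k, μ (xv k)) * ∑ y, Real.negMulLog (W (xv i) (f xv i) y) := by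
  unfold ent'
  simp only [probOf_id]
  rw [Fintype.sum_prod_type]
  have step : ∀ xv : Fin n → 𝒳, ∑ yv : Fin n → 𝒴, Real.negMulLog (jointPmf μ f W (xv, yv))
      = Real.negMulLog (∏ k, μ (xv k))
        + (∏ k, μ (xv k)) * ∑ j, ∑ y, Real.negMulLog (W (xv j) (f xv j) y) := by
    intro xv
    have e1 : ∀ yv : Fin n → 𝒴, Real.negMulLog (jointPmf μ f W (xv, yv))
        = (∏ j, W (xv j) (f xv j) (yv j)) * Real.negMulLog (∏ k, μ (xv k))
          + (∏ k, μ (xv k)) * Real.negMulLog (∏ j, W (xv j) (f xv j) (yv j)) := by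
      intro yv
      rw [jp_apply, Real.negMulLog_mul]
    rw [Finset.sum_congr rfl fun yv _ => e1 yv, Finset.sum_add_distrib,
      ← Finset.sum_mul, sumQ f W hW1, one_mul, ← Finset.mul_sum]
    congr 1
    -- ∑ yv, negMulLog (∏ j, W ...) = ∑ j, ∑ y, negMulLog (W ...)
    rw [Finset.sum_congr rfl fun yv _ =>
      negMulLog_prod Finset.univ (fun j => W (xv j) (f xv j) (yv j))]
    have hcomm : (∑ yv : Fin n → 𝒴, ∑ j,
        (∏ k ∈ Finset.univ.erase j, W (xv k) (f xv k) (yv k))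
          * Real.negMulLog (W (xv j) (f xv j) (yv j)))
      = ∑ j, ∑ yv : Fin n → 𝒴,
        (∏ k ∈ Finset.univ.erase j, W (xv k) (f xv k) (yv k))
          * Real.negMulLog (W (xv j) (f xv j) (yv j)) := by exact Finset.sum_comm
    rw [hcomm]
    congr 1
    refine Finset.sum_congr rfl fun j _ => ?_
    rw [sum_pi_split (fun k => W (xv k) (f xv k)) j
      (fun y => Real.negMulLog (W (xv j) (f xv j) y))]
    have : ∏ k ∈ Finset.univ.erase j, ∑ b, W (xv k) (f xv k) b = 1 := by
      rw [Finset.prod_congr rfl fun k _ => hW1 (xv k) (f xv k), Finset.prod_const_one]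
    rw [this, mul_one]
  rw [Finset.sum_congr rfl fun xv _ => step xv, Finset.sum_add_distrib]
  congr 1
  · -- ∑ xv, negMulLog (∏ μ) = ∑ i, ∑ x, negMulLog (μ x)
    rw [Finset.sum_congr rfl fun xv _ => negMulLog_prod Finset.univ (fun k => μ (xv k))]
    have hcomm : (∑ xv : Fin n → 𝒳, ∑ j,
        (∏ k ∈ Finset.univ.erase j, μ (xv k)) * Real.negMulLog (μ (xv j)))
      = ∑ j, ∑ xv : Fin n → 𝒳,
        (∏ k ∈ Finset.univ.erase j, μ (xv k)) * Real.negMulLog (μ (xv j)) := by exact Finset.sum_comm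
    rw [hcomm]
    refine Finset.sum_congr rfl fun j _ => ?_
    rw [sum_pi_split (fun _ : Fin n => μ) j (fun x => Real.negMulLog (μ x))]
    have : ∏ k ∈ Finset.univ.erase j, ∑ b, μ b = 1 := by
      rw [Finset.prod_congr rfl fun k _ => hμ1, Finset.prod_const_one]
    rw [this, mul_one]
  · simp only [Finset.mul_sum]
    exact Finset.sum_comm

end specific

lemma ent_eq {Ω S : Type*} [Fintype Ω] [Fintype S] [DecidableEq S]
    (p : Ω → ℝ) (X : Ω → S) : ent p X = ent' p X / Real.log 2 := by
  unfold ent ent'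
  rw [Finset.sum_div]

/-- Generalized cut-set bound at the action node: under the memoryless action-dependent
source setup, for `M = g (X^n)` with `g` a deterministic map into a finite set,
`H(M) + H(X^n | Y^n, M) ≥ ∑ i, [ I(X_i;A_i) − I(Y_i;A_i) + H(X_i | A_i, Y_i) ]`. -/
theorem stmt_3 {n : ℕ} {𝒳 𝒜 𝒴 ℳ : Type*}
    [Fintype 𝒳] [DecidableEq 𝒳] [Fintype 𝒜] [DecidableEq 𝒜] [Fintype 𝒴] [DecidableEq 𝒴]
    [Fintype ℳ] [DecidableEq ℳ]
    (μ : 𝒳 → ℝ) (hμ0 : ∀ x, 0 ≤ μ x) (hμ1 : ∑ x, μ x = 1)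
    (f : (Fin n → 𝒳) → (Fin n → 𝒜))
    (W : 𝒳 → 𝒜 → 𝒴 → ℝ) (hW0 : ∀ x a y, 0 ≤ W x a y) (hW1 : ∀ x a, ∑ y, W x a y = 1)
    (g : (Fin n → 𝒳) → ℳ) :
    ent (jointPmf μ f W) (fun ω => g ω.1)
        + condEnt (jointPmf μ f W) (fun ω => ω.1) (fun ω => (ω.2, g ω.1))
      ≥ ∑ i : Fin n,
          (mutInfo (jointPmf μ f W) (fun ω => ω.1 i) (fun ω => f ω.1 i)
            - mutInfo (jointPmf μ f W) (fun ω => ω.2 i) (fun ω => f ω.1 i)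
            + condEnt (jointPmf μ f W) (fun ω => ω.1 i) (fun ω => (f ω.1 i, ω.2 i))) := by

  set p := jointPmf μ f W with hpdef
  have hp0 : ∀ ω, 0 ≤ p ω := jp_nonneg μ f W hμ0 hW0
  have hp1 : ∑ ω, p ω = 1 := jp_sum μ f W hμ1 hW1
  have L2 : (0:ℝ) < Real.log 2 := Real.log_pos one_lt_two
  -- abbreviations for the per-coordinate conditional entropy contribution
  set Hμ : ℝ := ∑ x, Real.negMulLog (μ x) with hHμ
  set C : Fin n → ℝ := fun i => ∑ xv : Fin n → 𝒳,
    (∏ k, μ (xv k)) * ∑ y, Real.negMulLog (W (xv i) (f xv i) y) with hC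
  -- entropy identities
  have eYA : ∀ i : Fin n, ent' p (fun ω => (ω.2 i, f ω.1 i))
      = ent' p (fun ω => (f ω.1 i, ω.2 i)) := fun i =>
    (ent'_comp_inj p (fun ω => (ω.2 i, f ω.1 i)) Prod.swap Prod.swap_injective).symm
  have eT : ∀ i : Fin n, ent' p (fun ω => (ω.1 i, (f ω.1 i, ω.2 i)))
      = ent' p (fun ω => ((ω.1 i, f ω.1 i), ω.2 i)) := by
    intro i
    have hinj : Function.Injective (fun q : (𝒳 × 𝒜) × 𝒴 => (q.1.1, (q.1.2, q.2))) := by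
      rintro ⟨⟨x, a⟩, y⟩ ⟨⟨x', a'⟩, y'⟩ h
      simp_all [Prod.ext_iff]
    exact ent'_comp_inj p (fun ω => ((ω.1 i, f ω.1 i), ω.2 i)) (fun q : (𝒳 × 𝒜) × 𝒴 => (q.1.1, (q.1.2, q.2))) hinj
  have eId : ent' p (fun ω => (ω.1, (ω.2, g ω.1))) = ent' p (fun ω => ω) := by
    have hinj : Function.Injective
        (fun q : (Fin n → 𝒳) × (Fin n → 𝒴) => (q.1, (q.2, g q.1))) := by
      rintro ⟨x, y⟩ ⟨x', y'⟩ h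
      simp_all [Prod.ext_iff]
    exact ent'_comp_inj p (fun ω => ω) (fun q : (Fin n → 𝒳) × (Fin n → 𝒴) => (q.1, (q.2, g q.1))) hinj
  have hX : ∀ i : Fin n, ent' p (fun ω => ω.1 i) = Hμ := entX μ f W hμ1 hW1
  have hT : ∀ i : Fin n, ent' p (fun ω => ((ω.1 i, f ω.1 i), ω.2 i))
      = ent' p (fun ω => (ω.1 i, f ω.1 i)) + C i := entT μ f W hW1
  have hId : ent' p (fun ω => ω) = (∑ _i : Fin n, Hμ) + ∑ i, C i := entId μ f W hμ1 hW1
  have subM : ent' p (fun ω => (ω.2, g ω.1))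
      ≤ ent' p (fun ω => ω.2) + ent' p (fun ω => g ω.1) :=
    ent'_pair_le p hp0 hp1 _ _
  have subY : ent' p (fun ω => ω.2) ≤ ∑ i, ent' p (fun ω => ω.2 i) :=
    ent'_pi_le p hp0 hp1 _
  -- the key inequality at the level of ent'
  have key : (∑ i : Fin n,
        (ent' p (fun ω => ω.1 i) + ent' p (fun ω => f ω.1 i)
            - ent' p (fun ω => (ω.1 i, f ω.1 i))
          - (ent' p (fun ω => ω.2 i) + ent' p (fun ω => f ω.1 i)
              - ent' p (fun ω => (ω.2 i, f ω.1 i)))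
          + (ent' p (fun ω => (ω.1 i, (f ω.1 i, ω.2 i)))
              - ent' p (fun ω => (f ω.1 i, ω.2 i)))))
      ≤ ent' p (fun ω => g ω.1)
        + (ent' p (fun ω => (ω.1, (ω.2, g ω.1))) - ent' p (fun ω => (ω.2, g ω.1))) := by
    have hterm : ∀ i : Fin n,
        (ent' p (fun ω => ω.1 i) + ent' p (fun ω => f ω.1 i)
            - ent' p (fun ω => (ω.1 i, f ω.1 i))
          - (ent' p (fun ω => ω.2 i) + ent' p (fun ω => f ω.1 i)
              - ent' p (fun ω => (ω.2 i, f ω.1 i)))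
          + (ent' p (fun ω => (ω.1 i, (f ω.1 i, ω.2 i)))
              - ent' p (fun ω => (f ω.1 i, ω.2 i))))
        = Hμ + C i - ent' p (fun ω => ω.2 i) := by
      intro i
      rw [eYA i, eT i, hT i, hX i]
      ring
    rw [Finset.sum_congr rfl fun i _ => hterm i, eId, hId]
    have hs : ∑ i : Fin n, (Hμ + C i - ent' p (fun ω => ω.2 i))
        = ((∑ _i : Fin n, Hμ) + ∑ i, C i) - ∑ i, ent' p (fun ω => ω.2 i) := by
      rw [Finset.sum_sub_distrib, Finset.sum_add_distrib]
    rw [hs]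
    linarith
  -- convert the goal to ent' form
  rw [ge_iff_le]
  have hrhs : (∑ i : Fin n,
        (mutInfo p (fun ω => ω.1 i) (fun ω => f ω.1 i)
          - mutInfo p (fun ω => ω.2 i) (fun ω => f ω.1 i)
          + condEnt p (fun ω => ω.1 i) (fun ω => (f ω.1 i, ω.2 i))))
      = (∑ i : Fin n,
        (ent' p (fun ω => ω.1 i) + ent' p (fun ω => f ω.1 i)
            - ent' p (fun ω => (ω.1 i, f ω.1 i))
          - (ent' p (fun ω => ω.2 i) + ent' p (fun ω => f ω.1 i)
              - ent' p (fun ω => (ω.2 i, f ω.1 i)))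
          + (ent' p (fun ω => (ω.1 i, (f ω.1 i, ω.2 i)))
              - ent' p (fun ω => (f ω.1 i, ω.2 i))))) / Real.log 2 := by
    rw [Finset.sum_div]
    refine Finset.sum_congr rfl fun i _ => ?_
    simp only [mutInfo, condEnt, ent_eq]
    ring
  have hlhs : ent p (fun ω => g ω.1) + condEnt p (fun ω => ω.1) (fun ω => (ω.2, g ω.1))
      = (ent' p (fun ω => g ω.1)
          + (ent' p (fun ω => (ω.1, (ω.2, g ω.1))) - ent' p (fun ω => (ω.2, g ω.1))))
        / Real.log 2 := by
    simp only [condEnt, ent_eq]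
    ring
  rw [hrhs, hlhs]
  exact (div_le_div_iff_of_pos_right L2).2 key
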